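/- Every arc diagram D on n ≥ 2 vertices in which every vertex has at most one left arc and every arc has length 1 or 2 (the length of arc (i,j) is j−i) decomposes uniquely as a concatenation D = D_1 · D_2 ⋯ D_k, where each D_i is either an interlacing diagram L_m (arcs (t,t+2) for all possible t on m+1 vertices, m ≥ 1) or an interconnecting diagram C_m (an interlacing diagram on m+1 vertices plus the arc (1,2), m ≥ 1). -/

import Mathlib

/-- The underlying arc set of a factor: `(false, m)` is the interlacing diagram `L_m`
on `m+1` vertices `0, …, m` with arcs `(t, t+2)` for `0 ≤ t ≤ m−2`; `(true, m)` is the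
interconnecting diagram `C_m`, which is `L_m` together with the arc `(0,1)`. -/
def diagOf : Bool × ℕ → Finset (ℕ × ℕ)
  | (false, m) => (Finset.range (m - 1)).image fun t => (t, t + 2)
  | (true, m) => insert (0, 1) ((Finset.range (m - 1)).image fun t => (t, t + 2))

/-- Shift all arcs of a diagram to the right by `k`. -/
def shiftArcs (k : ℕ) (A : Finset (ℕ × ℕ)) : Finset (ℕ × ℕ) :=
  A.image fun p => (p.1 + k, p.2 + k)

/-- The concatenation of a list of factors: each factor `(b, m)` has length `m`
(occupying `m+1` vertices, the last of which is shared with the next factor). -/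
def concatList : List (Bool × ℕ) → Finset (ℕ × ℕ)
  | [] => ∅
  | f :: rest => diagOf f ∪ shiftArcs f.2 (concatList rest)

lemma mem_diagOf_iff (b : Bool) (m : ℕ) (p : ℕ × ℕ) :
    p ∈ diagOf (b, m) ↔ ((b = true ∧ p = (0, 1)) ∨ ∃ t, t < m - 1 ∧ p = (t, t + 2)) := by
  cases b <;> simp [diagOf, Finset.mem_image, Finset.mem_range, eq_comm]

lemma diagOf_fst_lt {b : Bool} {m : ℕ} (hm : 1 ≤ m) {p : ℕ × ℕ}
    (hp : p ∈ diagOf (b, m)) : p.1 < m := by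
  rw [mem_diagOf_iff] at hp
  rcases hp with ⟨-, rfl⟩ | ⟨t, ht, rfl⟩ <;> simp <;> omega

lemma mem_shiftArcs {k : ℕ} {A : Finset (ℕ × ℕ)} {p : ℕ × ℕ} :
    p ∈ shiftArcs k A ↔ ∃ q ∈ A, p = (q.1 + k, q.2 + k) := by
  simp [shiftArcs, Finset.mem_image, eq_comm]

lemma shiftArcs_injective (k : ℕ) : Function.Injective (shiftArcs k) := by
  apply Finset.image_injective
  intro a b h
  simp only [Prod.mk.injEq] at h
  exact Prod.ext (by omega) (by omega)

lemma arc_decomp_aux : ∀ n : ℕ, 1 ≤ n → ∀ A : Finset (ℕ × ℕ),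
    (∀ p ∈ A, p.1 < p.2 ∧ p.2 < n ∧ p.2 - p.1 ≤ 2) →
    (∀ p ∈ A, ∀ q ∈ A, p.2 = q.2 → p = q) →
    ∃! fs : List (Bool × ℕ),
      (∀ f ∈ fs, 1 ≤ f.2) ∧ (fs.map Prod.snd).sum = n - 1 ∧ A = concatList fs := by
  intro n
  induction n using Nat.strong_induction_on with
  | _ n ih =>
  intro hn A hvalid hleft
  rcases eq_or_lt_of_le hn with h1 | h2
  · -- n = 1 : A is empty, the empty list is the unique decomposition
    have hA : A = ∅ := by
      ext p
      simp only [Finset.notMem_empty, iff_false]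
      intro hp
      have := hvalid p hp
      omega
    refine ⟨[], ⟨by simp, by simp [← h1], by simp [hA, concatList]⟩, ?_⟩
    rintro fs ⟨hf1, hf2, hf3⟩
    cases fs with
    | nil => rfl
    | cons f rest =>
      exfalso
      have h1f := hf1 f (List.mem_cons_self ..)
      simp only [List.map_cons, List.sum_cons] at hf2
      omega
  · -- 2 ≤ n
    have hex : ∃ k, (k, k + 2) ∉ A := by
      refine ⟨n - 2, fun hc => ?_⟩
      have := hvalid _ hc
      simp only at this
      omega
    set t0 := Nat.find hex with ht0def
    have hnot : (t0, t0 + 2) ∉ A := Nat.find_spec hex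
    have hmem : ∀ t < t0, (t, t + 2) ∈ A := fun t ht =>
      not_not.mp (Nat.find_min hex ht)
    have ht0n : t0 ≤ n - 2 := by
      apply Nat.find_min'
      intro hc
      have := hvalid _ hc
      simp only at this
      omega
    set m := t0 + 1 with hmdef
    have hm1 : 1 ≤ m := by omega
    have hmn : m ≤ n - 1 := by omega
    set b : Bool := decide ((0, 1) ∈ A) with hbdef
    have hb_iff : b = true ↔ (0, 1) ∈ A := by simp [hbdef]
    -- every arc with small first coordinate lies in the first factor
    have low_mem : ∀ p ∈ A, p.1 < m → p ∈ diagOf (b, m) := by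
      intro p hp hplow
      obtain ⟨i, j⟩ := p
      obtain ⟨hij, hjn, hlen⟩ := hvalid _ hp
      simp only at hij hjn hlen hplow ⊢
      rw [mem_diagOf_iff]
      rcases (by omega : j = i + 1 ∨ j = i + 2) with rfl' | rfl'
      · subst rfl'
        rcases Nat.eq_zero_or_pos i with rfl | hi
        · exact Or.inl ⟨hb_iff.mpr hp, rfl⟩
        · exfalso
          have hmem2 : (i - 1, i + 1) ∈ A := by
            have : (i - 1) + 2 = i + 1 := by omega
            rw [← this]
            exact hmem (i - 1) (by omega)
          have := hleft _ hmem2 _ hp rfl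
          simp only [Prod.mk.injEq] at this
          omega
      · subst rfl'
        refine Or.inr ⟨i, ?_, rfl⟩
        have : i ≠ t0 := fun h => hnot (h ▸ hp)
        omega
    have diag_sub : diagOf (b, m) ⊆ A := by
      intro p hp
      rw [mem_diagOf_iff] at hp
      rcases hp with ⟨hb, rfl⟩ | ⟨t, ht, rfl⟩
      · exact hb_iff.mp hb
      · exact hmem t (by omega)
    -- the remainder diagram
    set A' : Finset (ℕ × ℕ) :=
      (A.filter fun p => m ≤ p.1).image fun p => (p.1 - m, p.2 - m) with hA'def
    have shift_eq : shiftArcs m A' = A.filter fun p => m ≤ p.1 := by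
      ext p
      rw [mem_shiftArcs]
      simp only [hA'def, Finset.mem_image, Finset.mem_filter]
      constructor
      · rintro ⟨q, ⟨r, ⟨hrA, hrm⟩, rfl⟩, rfl⟩
        obtain ⟨h1, h2, h3⟩ := hvalid _ hrA
        have e1 : r.1 - m + m = r.1 := by omega
        have e2 : r.2 - m + m = r.2 := by omega
        simp only [e1, e2]
        exact ⟨(by simpa using hrA), by omega⟩
      · rintro ⟨hpA, hpm⟩
        obtain ⟨h1, h2, h3⟩ := hvalid _ hpA
        exact ⟨(p.1 - m, p.2 - m), ⟨p, ⟨hpA, hpm⟩, rfl⟩, by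
          simp only [Prod.ext_iff]; omega⟩
    have A'valid : ∀ p ∈ A', p.1 < p.2 ∧ p.2 < n - m ∧ p.2 - p.1 ≤ 2 := by
      intro p hp
      simp only [hA'def, Finset.mem_image, Finset.mem_filter] at hp
      obtain ⟨q, ⟨hqA, hqm⟩, rfl⟩ := hp
      obtain ⟨h1, h2, h3⟩ := hvalid _ hqA
      simp only
      omega
    have A'left : ∀ p ∈ A', ∀ q ∈ A', p.2 = q.2 → p = q := by
      intro p hp q hq hpq
      simp only [hA'def, Finset.mem_image, Finset.mem_filter] at hp hq
      obtain ⟨r, ⟨hrA, hrm⟩, rfl⟩ := hp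
      obtain ⟨s, ⟨hsA, hsm⟩, rfl⟩ := hq
      obtain ⟨hr1, -, -⟩ := hvalid _ hrA
      obtain ⟨hs1, -, -⟩ := hvalid _ hsA
      simp only at hpq ⊢
      have : r = s := hleft _ hrA _ hsA (by omega)
      rw [this]
    obtain ⟨rest, ⟨hr1, hr2, hr3⟩, hruniq⟩ :=
      ih (n - m) (by omega) (by omega) A' A'valid A'left
    have A_eq : A = concatList ((b, m) :: rest) := by
      show A = diagOf (b, m) ∪ shiftArcs m (concatList rest)
      rw [← hr3, shift_eq]
      ext p
      simp only [Finset.mem_union, Finset.mem_filter]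
      constructor
      · intro hp
        by_cases hc : p.1 < m
        · exact Or.inl (low_mem p hp hc)
        · exact Or.inr ⟨hp, by omega⟩
      · rintro (hp | ⟨hp, -⟩)
        · exact diag_sub hp
        · exact hp
    refine ⟨(b, m) :: rest, ⟨?_, ?_, A_eq⟩, ?_⟩
    · intro f hf
      rcases List.mem_cons.mp hf with rfl | hf
      · exact hm1
      · exact hr1 f hf
    · simp only [List.map_cons, List.sum_cons, hr2]
      omega
    · -- uniqueness
      rintro fs' ⟨hg1, hg2, hg3⟩
      cases fs' with
      | nil =>
        exfalso
        simp only [List.map_nil, List.sum_nil] at hg2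
        omega
      | cons f rest' =>
        obtain ⟨b', m'⟩ := f
        have hg3' : A = diagOf (b', m') ∪ shiftArcs m' (concatList rest') := hg3
        have hm'1 : 1 ≤ m' := hg1 _ (List.mem_cons_self ..)
        -- arcs forced by the first factor
        have stepA : ∀ t < m' - 1, (t, t + 2) ∈ A := by
          intro t ht
          rw [hg3']
          exact Finset.mem_union_left _ ((mem_diagOf_iff _ _ _).mpr (Or.inr ⟨t, ht, rfl⟩))
        have stepB : (m' - 1, m' + 1) ∉ A := by
          rw [hg3']
          intro hc
          rcases Finset.mem_union.mp hc with hc | hc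
          · rw [mem_diagOf_iff] at hc
            rcases hc with ⟨-, hc⟩ | ⟨t, ht, hc⟩ <;>
              (simp only [Prod.mk.injEq] at hc; omega)
          · rw [mem_shiftArcs] at hc
            obtain ⟨q, -, hc⟩ := hc
            simp only [Prod.mk.injEq] at hc
            omega
        have hm'm : m' = m := by
          have h1 : t0 ≤ m' - 1 := by
            apply Nat.find_min'
            have e : m' - 1 + 2 = m' + 1 := by omega
            rw [e]
            exact stepB
          have h2 : ¬ (t0 < m' - 1) := fun hc => hnot (stepA t0 hc)
          omega
        subst hm'm
        have hb'b : b' = b := by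
          cases b' with
          | true =>
            symm
            rw [hb_iff, hg3']
            exact Finset.mem_union_left _
              ((mem_diagOf_iff _ _ _).mpr (Or.inl ⟨rfl, rfl⟩))
          | false =>
            symm
            rw [← Bool.not_eq_true, hb_iff]
            intro hc
            rw [hg3'] at hc
            rcases Finset.mem_union.mp hc with hc | hc
            · rw [mem_diagOf_iff] at hc
              rcases hc with ⟨hfalse, -⟩ | ⟨t, ht, hc⟩
              · exact Bool.noConfusion hfalse
              · simp only [Prod.mk.injEq] at hc; omega
            · rw [mem_shiftArcs] at hc
              obtain ⟨q, -, hc⟩ := hc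
              simp only [Prod.mk.injEq] at hc
              omega
        subst hb'b
        have stepD : shiftArcs m (concatList rest') = A.filter fun p => m ≤ p.1 := by
          ext p
          simp only [Finset.mem_filter]
          constructor
          · intro hp
            refine ⟨hg3' ▸ Finset.mem_union_right _ hp, ?_⟩
            rw [mem_shiftArcs] at hp
            obtain ⟨q, -, rfl⟩ := hp
            simp only
            omega
          · rintro ⟨hpA, hpm⟩
            rw [hg3'] at hpA
            rcases Finset.mem_union.mp hpA with hc | hc
            · exact absurd (diagOf_fst_lt hm'1 hc) (by omega)
            · exact hc
        have hrest' : concatList rest' = A' := by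
          apply shiftArcs_injective m
          rw [stepD, shift_eq]
        have : rest' = rest := by
          apply hruniq
          refine ⟨fun f hf => hg1 f (List.mem_cons_of_mem _ hf), ?_, hrest'.symm⟩
          simp only [List.map_cons, List.sum_cons] at hg2
          omega
        rw [this]

/-- Every arc diagram on `n ≥ 2` vertices in which every vertex has at most one left
arc and every arc has length 1 or 2 decomposes uniquely as a concatenation of
interlacing diagrams `L_m` and interconnecting diagrams `C_m` of lengths `m ≥ 1`. -/
theorem arc_diagram_decomposition (n : ℕ) (hn : 2 ≤ n) (A : Finset (ℕ × ℕ))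
    (hvalid : ∀ p ∈ A, p.1 < p.2 ∧ p.2 < n ∧ p.2 - p.1 ≤ 2)
    (hleft : ∀ p ∈ A, ∀ q ∈ A, p.2 = q.2 → p = q) :
    ∃! fs : List (Bool × ℕ),
      (∀ f ∈ fs, 1 ≤ f.2) ∧ (fs.map Prod.snd).sum = n - 1 ∧ A = concatList fs := by
  exact arc_decomp_aux n (by omega) A hvalid hleft
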